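/- arXiv:1607.00601 — 4 statements merged into one kernel-verified Lean document; each statement's English description precedes it below -/
import Mathlib

section
/- Given a graph covering by covers φᵢ : Gᵢ → Gᵢ₋₁, the edge relation E_𝒢 = { (x,y) ∈ V_𝒢 × V_𝒢 : (xᵢ,yᵢ) ∈ Eᵢ for all i } on the inverse limit V_𝒢 defines a function, i.e., for every x ∈ V_𝒢 there is a unique y ∈ V_𝒢 with (x,y) ∈ E_𝒢. -/
/-- The edge relation is surjective: every vertex has an incoming and outgoing edge. -/
def IsSurjRel {V : Type*} (E : Set (V × V)) : Prop :=
  ∀ v : V, (∃ u, (u, v) ∈ E) ∧ (∃ u, (v, u) ∈ E)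

/-- A cover: a positively directional edge-surjective graph homomorphism. -/
def IsCover {V₁ V₂ : Type*} (E₁ : Set (V₁ × V₁)) (E₂ : Set (V₂ × V₂))
    (φ : V₁ → V₂) : Prop :=
  (∀ u v : V₁, (u, v) ∈ E₁ → (φ u, φ v) ∈ E₂) ∧
  ((fun e : V₁ × V₁ => (φ e.1, φ e.2)) '' E₁ = E₂) ∧
  (∀ u v v' : V₁, (u, v) ∈ E₁ → (u, v') ∈ E₁ → φ v = φ v')

/-- A graph covering: a sequence of covers `φ i : G (i+1) → G i` between finite
directed surjective graphs, with `G 0` a singleton graph. -/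
structure GraphCovering (V : ℕ → Type*) where
  E : ∀ i, Set (V i × V i)
  φ : ∀ i, V (i + 1) → V i
  surj : ∀ i, IsSurjRel (E i)
  cover : ∀ i, IsCover (E (i + 1)) (E i) (φ i)
  single : Subsingleton (V 0)
  nonempty₀ : Nonempty (V 0)

/-- The inverse limit vertex set of a graph covering. -/
def GraphCovering.limitSet {V : ℕ → Type*} (G : GraphCovering V) :
    Set (∀ i, V i) :=
  { x | ∀ i, x i = G.φ i (x (i + 1)) }

/-- The edge relation on the inverse limit defines a function: every `x ∈ V_𝒢`
has a unique `y ∈ V_𝒢` with `(x, y) ∈ E_𝒢`. -/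
theorem limit_edge_relation_functional {V : ℕ → Type*} [∀ i, Fintype (V i)]
    (G : GraphCovering V) (x : ∀ i, V i) (hx : x ∈ G.limitSet) :
    ∃! y : ∀ i, V i, y ∈ G.limitSet ∧ ∀ i, (x i, y i) ∈ G.E i := by
  choose w hw using fun i => (G.surj (i + 1) (x (i + 1))).2
  refine ⟨fun i => G.φ i (w i), ⟨?_, ?_⟩, ?_⟩
  · intro i
    have h2 : (x (i + 1), G.φ (i + 1) (w (i + 1))) ∈ G.E (i + 1) := by
      have := (G.cover (i + 1)).1 _ _ (hw (i + 1))
      rwa [← hx (i + 1)] at this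
    exact (G.cover i).2.2 _ _ _ (hw i) h2
  · intro i
    have := (G.cover i).1 _ _ (hw i)
    rwa [← hx i] at this
  · rintro y ⟨hy, hye⟩
    funext i
    have : G.φ i (y (i + 1)) = G.φ i (w i) :=
      (G.cover i).2.2 _ _ _ (hye (i + 1)) (hw i)
    rw [hy i, this]
end

section
/- Given a graph covering by covers φᵢ, the induced map f : V_𝒢 → V_𝒢 defined by f(x) = y iff (x,y) ∈ E_𝒢 is continuous and surjective; hence (V_𝒢, f) is a zero-dimensional dynamical system. -/
open CategoryTheory in
/-- Given `y` in the inverse limit, there is `x` in the inverse limit with an edge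
to `y` in every coordinate. -/
lemma GraphCovering.exists_pred {V : ℕ → Type*} [∀ i, Fintype (V i)]
    (G : GraphCovering V) (y : ∀ i, V i) (hy : y ∈ G.limitSet) :
    ∃ x ∈ G.limitSet, ∀ i, (x i, y i) ∈ G.E i := by
  -- the system of predecessors of `y i`
  let A : ℕ → Type _ := fun i => {u : V i // (u, y i) ∈ G.E i}
  let hmap : ∀ i, A (i + 1) → A i := fun i u =>
    ⟨G.φ i u.1, by
      have := (G.cover i).1 u.1 (y (i + 1)) u.2
      rwa [← hy i] at this⟩
  let F : ℕᵒᵖ ⥤ Type _ := Functor.ofOpSequence (fun i => TypeCat.ofHom (hmap i))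
  haveI : ∀ j : ℕᵒᵖ, Finite (F.obj j) := fun j => by
    show Finite (A j.unop); exact Subtype.finite
  haveI : ∀ j : ℕᵒᵖ, Nonempty (F.obj j) := fun j => by
    show Nonempty (A j.unop)
    obtain ⟨u, hu⟩ := (G.surj j.unop (y j.unop)).1
    exact ⟨⟨u, hu⟩⟩
  obtain ⟨s, hs⟩ := nonempty_sections_of_finite_inverse_system F
  refine ⟨fun i => (s ⟨i⟩).1, fun i => ?_, fun i => (s ⟨i⟩).2⟩
  have := hs (homOfLE (Nat.le_add_right i 1)).op
  rw [Functor.ofOpSequence_map_homOfLE_succ] at this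
  have : hmap i (s ⟨i + 1⟩) = s ⟨i⟩ := this
  show (s ⟨i⟩).1 = G.φ i (s ⟨i + 1⟩).1
  exact (congrArg Subtype.val this).symm

/-- The value `(f x) i` only depends on `x (i+1)`. -/
lemma GraphCovering.key {V : ℕ → Type*} (G : GraphCovering V)
    (f : G.limitSet → G.limitSet)
    (hf : ∀ x y : G.limitSet, f x = y ↔ ∀ i, ((x : ∀ i, V i) i, (y : ∀ i, V i) i) ∈ G.E i)
    (i : ℕ) (x y : G.limitSet) (h : (x : ∀ i, V i) (i + 1) = (y : ∀ i, V i) (i + 1)) :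
    ((f x : G.limitSet) : ∀ i, V i) i = ((f y : G.limitSet) : ∀ i, V i) i := by
  have hx := (hf x (f x)).mp rfl (i + 1)
  have hy := (hf y (f y)).mp rfl (i + 1)
  rw [← h] at hy
  have := (G.cover i).2.2 _ _ _ hx hy
  rw [(f x).2 i, (f y).2 i, this]

/-- The induced map `f` on the inverse limit (defined by `f x = y` iff
`(x, y) ∈ E_𝒢`) is continuous and surjective, and the phase space is a
compact zero-dimensional space. -/
theorem limit_map_continuous_surjective {V : ℕ → Type*} [∀ i, Fintype (V i)]
    [∀ i, TopologicalSpace (V i)] [∀ i, DiscreteTopology (V i)]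
    (G : GraphCovering V)
    (f : G.limitSet → G.limitSet)
    (hf : ∀ x y : G.limitSet, f x = y ↔ ∀ i, ((x : ∀ i, V i) i, (y : ∀ i, V i) i) ∈ G.E i) :
    Continuous f ∧ Function.Surjective f ∧
      CompactSpace G.limitSet ∧ TotallyDisconnectedSpace G.limitSet := by
  have hNE : ∀ i, Nonempty (V i) := by
    intro i
    induction i with
    | zero => exact G.nonempty₀
    | succ n ih =>
      obtain ⟨v⟩ := ih
      obtain ⟨u, hu⟩ := (G.surj n v).2
      rw [← (G.cover n).2.1] at hu
      obtain ⟨e, -, -⟩ := hu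
      exact ⟨e.1⟩
  refine ⟨?_, ?_, ?_, ?_⟩
  · -- continuity
    rw [continuous_induced_rng]
    refine continuous_pi fun i => ?_
    -- factor through coordinate i+1
    classical
    have : (fun x : G.limitSet => ((f x : G.limitSet) : ∀ i, V i) i) =
        (fun v : V (i + 1) =>
          if h : ∃ x : G.limitSet, (x : ∀ i, V i) (i + 1) = v then
            ((f h.choose : G.limitSet) : ∀ i, V i) i
          else Classical.arbitrary (V i)) ∘
        (fun x : G.limitSet => (x : ∀ i, V i) (i + 1)) := by
      funext x
      have h : ∃ z : G.limitSet, (z : ∀ i, V i) (i + 1) = (x : ∀ i, V i) (i + 1) := ⟨x, rfl⟩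
      simp only [Function.comp_apply, dif_pos h]
      exact (G.key f hf i h.choose x h.choose_spec).symm
    show Continuous fun x : G.limitSet => ((f x : G.limitSet) : ∀ i, V i) i
    rw [this]
    exact (continuous_of_discreteTopology).comp
      ((continuous_apply (i + 1)).comp continuous_subtype_val)
  · -- surjectivity
    intro y
    obtain ⟨x, hx, hxy⟩ := G.exists_pred y.1 y.2
    exact ⟨⟨x, hx⟩, (hf ⟨x, hx⟩ y).mpr hxy⟩
  · -- compactness
    have hclosed : IsClosed G.limitSet := by
      have : G.limitSet = ⋂ i, {x : ∀ i, V i | x i = G.φ i (x (i + 1))} := by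
        ext x; simp [GraphCovering.limitSet, Set.mem_iInter]
      rw [this]
      exact isClosed_iInter fun i =>
        isClosed_eq (continuous_apply i)
          ((continuous_of_discreteTopology).comp (continuous_apply (i + 1)))
    exact isCompact_iff_compactSpace.mp hclosed.isCompact
  · infer_instance
end

section
/- If in a graph covering all the covers φᵢ are bidirectional, then the induced map f : V_𝒢 → V_𝒢 on the inverse limit is a homeomorphism. -/
/-- Bidirectionality of a graph homomorphism. -/
def IsBidirectional {V₁ V₂ : Type*} (E₁ : Set (V₁ × V₁)) (φ : V₁ → V₂) : Prop :=
  (∀ u v v' : V₁, (u, v) ∈ E₁ → (u, v') ∈ E₁ → φ v = φ v') ∧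
  (∀ u u' v : V₁, (u, v) ∈ E₁ → (u', v) ∈ E₁ → φ u = φ u')

/-- A finite chain ending at a prescribed vertex. -/
lemma GraphCovering.chain_exists {V : ℕ → Type*} (G : GraphCovering V) (z : ∀ i, V i)
    (n : ℕ) (u : V n) :
    ∃ x : ∀ i, V i, (∀ i < n, x i = G.φ i (x (i + 1))) ∧ x n = u := by
  induction n with
  | zero => exact ⟨Function.update z 0 u, by simp, by simp⟩
  | succ n ih =>
    obtain ⟨x, hx1, hx2⟩ := ih (G.φ n u)
    refine ⟨Function.update x (n + 1) u, ?_, by simp⟩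
    intro i hi
    rcases eq_or_lt_of_le (Nat.lt_succ_iff.mp hi) with h | h
    · subst h
      rw [Function.update_of_ne (by omega), Function.update_self, hx2]
    · rw [Function.update_of_ne (by omega), Function.update_of_ne (by omega)]
      exact hx1 i h

lemma GraphCovering.chain_edges {V : ℕ → Type*} (G : GraphCovering V) (y : ∀ i, V i)
    (hy : ∀ i, y i = G.φ i (y (i + 1))) (x : ∀ i, V i) :
    ∀ n, (∀ i < n, x i = G.φ i (x (i + 1))) → (x n, y n) ∈ G.E n →
      ∀ i ≤ n, (x i, y i) ∈ G.E i := by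
  intro n
  induction n with
  | zero =>
    intro _ h i hi
    obtain rfl : i = 0 := Nat.le_zero.mp hi
    exact h
  | succ n ih =>
    intro hc he i hi
    rcases eq_or_lt_of_le hi with h | h
    · subst h; exact he
    · refine ih (fun j hj => hc j (by omega)) ?_ i (by omega)
      have := (G.cover n).1 _ _ he
      rwa [← hc n (by omega), ← hy n] at this

lemma closed_coord_rel {V : ℕ → Type*} [∀ i, TopologicalSpace (V i)]
    [∀ i, DiscreteTopology (V i)] (i j : ℕ) (S : Set (V i × V j)) :
    IsClosed {x : ∀ k, V k | (x i, x j) ∈ S} := by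
  have hc : Continuous fun x : ∀ k, V k => (x i, x j) :=
    (continuous_apply i).prodMk (continuous_apply j)
  exact (isClosed_discrete S).preimage hc

/-- If all the covers of a graph covering are bidirectional, then the induced
map on the inverse limit is a homeomorphism. -/
theorem limit_map_homeomorph_of_bidirectional {V : ℕ → Type*} [∀ i, Fintype (V i)]
    [∀ i, TopologicalSpace (V i)] [∀ i, DiscreteTopology (V i)]
    (G : GraphCovering V)
    (hbi : ∀ i, IsBidirectional (G.E (i + 1)) (G.φ i))
    (f : G.limitSet → G.limitSet)
    (hf : ∀ x y : G.limitSet, f x = y ↔ ∀ i, ((x : ∀ i, V i) i, (y : ∀ i, V i) i) ∈ G.E i) :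
    IsHomeomorph f := by
  classical
  -- limitSet is a compact Hausdorff space
  have hclLim : IsClosed G.limitSet := by
    have : G.limitSet = ⋂ i, {x : ∀ k, V k | (x i, x (i + 1)) ∈ {p : V i × V (i + 1) | p.1 = G.φ i p.2}} := by
      ext x; simp [GraphCovering.limitSet]
    rw [this]
    exact isClosed_iInter fun i => closed_coord_rel i (i + 1) _
  have : CompactSpace G.limitSet := isCompact_iff_compactSpace.mp hclLim.isCompact
  -- continuity
  have key : ∀ x x' : G.limitSet, ∀ i : ℕ,
      (x : ∀ i, V i) (i + 1) = (x' : ∀ i, V i) (i + 1) →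
      (f x : ∀ i, V i) i = (f x' : ∀ i, V i) i := by
    intro x x' i h
    have h1 := (hf x (f x)).mp rfl (i + 1)
    have h2 := (hf x' (f x')).mp rfl (i + 1)
    rw [← h] at h2
    have := (hbi i).1 _ _ _ h1 h2
    rw [(f x).2 i, (f x').2 i, this]
  have hcont : Continuous f := by
    rw [continuous_induced_rng]
    refine continuous_pi fun i => ?_
    have hlc : IsLocallyConstant fun x : G.limitSet => (f x : ∀ i, V i) i := by
      intro s
      have : (fun x : G.limitSet => (f x : ∀ i, V i) i) ⁻¹' s =
          (fun x : G.limitSet => (x : ∀ i, V i) (i + 1)) ⁻¹'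
            {w : V (i + 1) | ∃ x' : G.limitSet, (x' : ∀ i, V i) (i + 1) = w ∧
              (f x' : ∀ i, V i) i ∈ s} := by
        ext x
        constructor
        · intro hx; exact ⟨x, rfl, hx⟩
        · rintro ⟨x', hx', hs⟩
          simpa [Set.mem_preimage, key x x' i hx'.symm] using hs
      rw [this]
      exact (isOpen_discrete _).preimage ((continuous_apply (i + 1)).comp continuous_subtype_val)
    exact hlc.continuous
  -- injectivity
  have hinj : Function.Injective f := by
    intro x x' hxx
    have h1 := (hf x (f x)).mp rfl
    have h2 := (hf x' (f x')).mp rfl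
    rw [hxx] at h1
    ext i
    have := (hbi i).2 _ _ _ (h1 (i + 1)) (h2 (i + 1))
    rw [x.2 i, x'.2 i, this]
  -- surjectivity
  have hsurj : Function.Surjective f := by
    intro y
    set T : ℕ → Set (∀ i, V i) := fun n =>
      {x | (∀ i < n, x i = G.φ i (x (i + 1))) ∧ ∀ i ≤ n, (x i, (y : ∀ i, V i) i) ∈ G.E i}
      with hT
    have hTsub : ∀ n, T (n + 1) ⊆ T n := by
      rintro n x ⟨h1, h2⟩
      exact ⟨fun i hi => h1 i (by omega), fun i hi => h2 i (by omega)⟩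
    have hTne : ∀ n, (T n).Nonempty := by
      intro n
      obtain ⟨u, hu⟩ := (G.surj n ((y : ∀ i, V i) n)).1
      obtain ⟨x, hx1, hx2⟩ := G.chain_exists (y : ∀ i, V i) n u
      refine ⟨x, hx1, G.chain_edges _ y.2 x n hx1 (hx2 ▸ hu)⟩
    have hTcl : ∀ n, IsClosed (T n) := by
      intro n
      have h1 : IsClosed {x : ∀ k, V k | ∀ i < n, x i = G.φ i (x (i + 1))} := by
        have he : {x : ∀ k, V k | ∀ i < n, x i = G.φ i (x (i + 1))} =
            ⋂ i, ⋂ _ : i < n,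
              {x : ∀ k, V k | (x i, x (i + 1)) ∈ {p : V i × V (i + 1) | p.1 = G.φ i p.2}} := by
          ext x; simp
        rw [he]
        exact isClosed_iInter fun i => isClosed_iInter fun _ => closed_coord_rel i (i + 1) _
      have h2 : IsClosed {x : ∀ k, V k | ∀ i ≤ n, (x i, (y : ∀ i, V i) i) ∈ G.E i} := by
        have he : {x : ∀ k, V k | ∀ i ≤ n, (x i, (y : ∀ i, V i) i) ∈ G.E i} =
            ⋂ i, ⋂ _ : i ≤ n,
              {x : ∀ k, V k | (x i, x i) ∈ {p : V i × V i | (p.1, (y : ∀ i, V i) i) ∈ G.E i}} := by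
          ext x; simp
        rw [he]
        exact isClosed_iInter fun i => isClosed_iInter fun _ => closed_coord_rel i i _
      exact h1.inter h2
    obtain ⟨x, hx⟩ := IsCompact.nonempty_iInter_of_sequence_nonempty_isCompact_isClosed
      T hTsub hTne ((hTcl 0).isCompact) hTcl
    simp only [Set.mem_iInter] at hx
    have hlim : x ∈ G.limitSet := fun i => (hx (i + 1)).1 i (Nat.lt_succ_self i)
    exact ⟨⟨x, hlim⟩, ((hf ⟨x, hlim⟩ y).mpr fun i => (hx i).2 i le_rfl)⟩
  exact isHomeomorph_iff_continuous_bijective.mpr ⟨hcont, hinj, hsurj⟩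
end

section
/- Let 𝒢 be a graph covering with inverse limit system (V_𝒢, f). If for all n ≥ 0 there exists m > n such that every circuit c of G_m satisfies V(φ_{m,n}(c)) = V(G_n) (the image of the vertex set of c under φ_{m,n} is all of V(G_n)), then (V_𝒢, f) is minimal. -/
/-- The composed covering map `φ_{m,n} : V m → V n` for `n ≤ m`. -/
def compMap {V : ℕ → Type*} (φ : ∀ i, V (i + 1) → V i) :
    ∀ {n m : ℕ}, n ≤ m → V m → V n :=
  fun {n} {m} h =>
    Nat.leRecOn (C := fun k => V k → V n) h
      (fun {k} ih x => ih (φ k x)) id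

/-- A circuit of period `l` in the graph with edge set `E`: a cycle
`(c 0, …, c l)` with `c l = c 0` and `c 0, …, c (l-1)` mutually distinct. -/
def IsCircuit {V : Type*} (E : Set (V × V)) (l : ℕ) (c : ℕ → V) : Prop :=
  1 ≤ l ∧ c l = c 0 ∧ (∀ i < l, (c i, c (i + 1)) ∈ E) ∧
    ∀ i < l, ∀ j < l, c i = c j → i = j

lemma compMap_self' {V : ℕ → Type*} (φ : ∀ i, V (i + 1) → V i) {n : ℕ}
    (h : n ≤ n) (x : V n) : compMap φ h x = x := by
  unfold compMap
  rw [Nat.leRecOn_self]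
  rfl

lemma compMap_succ' {V : ℕ → Type*} (φ : ∀ i, V (i + 1) → V i) {n m : ℕ}
    (h : n ≤ m) (h2 : n ≤ m + 1) (x : V (m + 1)) :
    compMap φ h2 x = compMap φ h (φ m x) := by
  unfold compMap
  rw [Nat.leRecOn_succ h]

lemma compMap_eq_of_mem {V : ℕ → Type*} (G : GraphCovering V) {y : ∀ i, V i}
    (hy : y ∈ G.limitSet) {n m : ℕ} (h : n ≤ m) :
    compMap G.φ h (y m) = y n := by
  induction m, h using Nat.le_induction with
  | base => exact compMap_self' G.φ le_rfl _
  | succ m h ih =>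
    rw [compMap_succ' G.φ h, ← hy m]
    exact ih

/-- From any closed walk one can extract a circuit whose vertices all lie
on the walk. -/
lemma exists_circuit_of_walk {W : Type*} (E : Set (W × W)) (p : ℕ → W)
    (hp : ∀ k, (p k, p (k + 1)) ∈ E) :
    ∀ d a b, b - a = d → a < b → p a = p b →
      ∃ l c, IsCircuit E l c ∧ ∀ i : ℕ, ∃ k : ℕ, c i = p k := by
  intro d
  induction d using Nat.strong_induction_on with
  | _ d ih =>
    intro a b hd hab hpab
    by_cases hinj : ∀ i j, a ≤ i → i < b → a ≤ j → j < b → p i = p j → i = j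
    · refine ⟨b - a, fun i => p (a + i % (b - a)), ⟨by omega, ?_, ?_, ?_⟩,
        fun i => ⟨_, rfl⟩⟩
      · simp [Nat.mod_self]
      · intro i hi
        have h1 : i % (b - a) = i := Nat.mod_eq_of_lt hi
        rcases eq_or_lt_of_le (Nat.succ_le_of_lt hi) with h | h
        · have h2 : (i + 1) % (b - a) = 0 := by rw [← h, Nat.mod_self]
          have h3 : p (a + (i + 1)) = p (a + 0) := by
            have : a + (i + 1) = b := by omega
            rw [this, ← hpab, Nat.add_zero]
          simp only [h1, h2]
          rw [← h3, ← Nat.add_assoc]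
          exact hp (a + i)
        · simp only [h1, Nat.mod_eq_of_lt h]
          exact hp (a + i)
      · intro i hi j hj hijeq
        have hi' : i % (b - a) = i := Nat.mod_eq_of_lt hi
        have hj' : j % (b - a) = j := Nat.mod_eq_of_lt hj
        simp only [hi', hj'] at hijeq
        have := hinj (a + i) (a + j) (by omega) (by omega) (by omega) (by omega)
          hijeq
        omega
    · push_neg at hinj
      obtain ⟨i, j, hi1, hi2, hj1, hj2, heq, hne⟩ := hinj
      rcases lt_trichotomy i j with h | h | h
      · exact ih (j - i) (by omega) i j rfl h heq
      · exact absurd h hne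
      · exact ih (i - j) (by omega) j i rfl h heq.symm

/-- Minimality criterion (sufficiency): if for all `n` there is `m > n` such
that every circuit of `G m` projects onto all vertices of `G n`, then the
inverse limit system is minimal (every forward orbit is dense). -/
theorem limit_minimal_of_circuit_condition {V : ℕ → Type*} [∀ i, Fintype (V i)]
    [∀ i, TopologicalSpace (V i)] [∀ i, DiscreteTopology (V i)]
    (G : GraphCovering V)
    (f : G.limitSet → G.limitSet)
    (hf : ∀ x y : G.limitSet, f x = y ↔
      ∀ i, ((x : ∀ i, V i) i, (y : ∀ i, V i) i) ∈ G.E i)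
    (hcirc : ∀ n : ℕ, ∃ m : ℕ, ∃ h : n < m,
      ∀ (l : ℕ) (c : ℕ → V m), IsCircuit (G.E m) l c →
        ∀ v : V n, ∃ i ≤ l, compMap G.φ h.le (c i) = v) :
    ∀ x : G.limitSet, Dense (Set.range fun k : ℕ => f^[k] x) := by
  intro x
  -- Key claim: the orbit hits every vertex at every level.
  have key : ∀ (n : ℕ) (v : V n), ∃ k : ℕ,
      ((f^[k] x : G.limitSet) : ∀ i, V i) n = v := by
    intro n v
    obtain ⟨m, hm, hc⟩ := hcirc n
    set p : ℕ → V m := fun k => ((f^[k] x : G.limitSet) : ∀ i, V i) m with hp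
    have hedge : ∀ k, (p k, p (k + 1)) ∈ G.E m := by
      intro k
      have hstep : f (f^[k] x) = f^[k + 1] x :=
        (Function.iterate_succ_apply' f k x).symm
      exact (hf (f^[k] x) (f^[k + 1] x)).mp hstep m
    obtain ⟨a, b, hab, heq⟩ := Finite.exists_ne_map_eq_of_infinite p
    have hwalk : ∃ a b : ℕ, a < b ∧ p a = p b := by
      rcases lt_or_gt_of_ne hab with h | h
      · exact ⟨a, b, h, heq⟩
      · exact ⟨b, a, h, heq.symm⟩
    obtain ⟨a, b, hab', heq'⟩ := hwalk
    obtain ⟨l, c, hcirc', hvert⟩ :=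
      exists_circuit_of_walk (G.E m) p hedge (b - a) a b rfl hab' heq'
    obtain ⟨i, _, hiv⟩ := hc l c hcirc' v
    obtain ⟨k, hk⟩ := hvert i
    refine ⟨k, ?_⟩
    rw [← compMap_eq_of_mem G (f^[k] x).2 hm.le]
    rw [hp] at hk
    simp only at hk
    rw [← hk, hiv]
  -- Density via basic open sets.
  rw [dense_iff_inter_open]
  intro U hU hUne
  obtain ⟨z, hzU⟩ := hUne
  obtain ⟨Wo, hWo, hWoU⟩ := isOpen_induced_iff.mp hU
  have hzW : (z : ∀ i, V i) ∈ Wo := by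
    rw [← hWoU] at hzU; exact hzU
  obtain ⟨I, u, hu, hpi⟩ := isOpen_pi_iff.mp hWo _ hzW
  set n := I.sup id with hn
  obtain ⟨k, hk⟩ := key n ((z : ∀ i, V i) n)
  refine ⟨f^[k] x, ?_, k, rfl⟩
  rw [← hWoU]
  apply hpi
  intro i hi
  have hin : i ≤ n := Finset.le_sup (f := id) hi
  have hcoord : ((f^[k] x : G.limitSet) : ∀ i, V i) i = (z : ∀ i, V i) i := by
    rw [← compMap_eq_of_mem G (f^[k] x).2 hin, hk,
      compMap_eq_of_mem G z.2 hin]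
  rw [hcoord]
  exact (hu i hi).2
end
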